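/- There exists a positive integer n₀ such that for every integer n ≥ n₀, f(3n−1)² + 2·f(3n−1)·f(2n−1) > f(3n)·f(3n−2) + f(3n−2)·f(2n). -/

import Mathlib

open Finset

/-- `f n` is the number of relatively prime subsets of `{1, 2, ..., n}`,
i.e. subsets `A` with `gcd A = 1` (such subsets are automatically nonempty). -/
def f (n : ℕ) : ℕ :=
  ((Finset.Icc 1 n).powerset.filter (fun A => A.gcd id = 1)).card


lemma card_filter_dvd' (m g : ℕ) : ((Finset.Icc 1 m).filter (fun x => g ∣ x)).card = m / g := by
  rw [show (1:ℕ) = 0 + 1 from rfl, Finset.Icc_add_one_left_eq_Ioc]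
  exact Nat.Ioc_filter_dvd_card_eq_div m g

lemma f_upper (m : ℕ) : f m + 2^(m/2) ≤ 2^m := by
  unfold f
  classical
  set S := (Finset.Icc 1 m).filter (fun x => 2 ∣ x) with hS
  have hScard : S.powerset.card = 2^(m/2) := by
    rw [Finset.card_powerset, card_filter_dvd']
  have hdisj : Disjoint ((Finset.Icc 1 m).powerset.filter (fun A => A.gcd id = 1)) S.powerset := by
    rw [Finset.disjoint_left]
    intro A hA hA2
    simp only [Finset.mem_filter, Finset.mem_powerset] at hA hA2
    have h2 : 2 ∣ A.gcd id :=
      Finset.dvd_gcd (fun x hx => (Finset.mem_filter.mp (hA2 hx)).2)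
    rw [hA.2] at h2
    omega
  have hsub : (Finset.Icc 1 m).powerset.filter (fun A => A.gcd id = 1) ∪ S.powerset
      ⊆ (Finset.Icc 1 m).powerset := by
    apply Finset.union_subset (Finset.filter_subset _ _)
    exact Finset.powerset_mono.mpr (Finset.filter_subset _ _)
  have := Finset.card_le_card hsub
  rw [Finset.card_union_of_disjoint hdisj, hScard, Finset.card_powerset, Nat.card_Icc] at this
  simpa using this

lemma f_lower (m : ℕ) (hm : 2 ≤ m) :
    2^m ≤ f m + 2^(m/2) + (m+2) * 2^(m/3) := by
  unfold f
  classical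
  have hsplit : ((Finset.Icc 1 m).powerset.filter (fun A => A.gcd id = 1)).card
      + ((Finset.Icc 1 m).powerset.filter (fun A => ¬ A.gcd id = 1)).card = 2^m := by
    rw [Finset.card_filter_add_card_filter_not, Finset.card_powerset, Nat.card_Icc]
    simp
  have hsub : (Finset.Icc 1 m).powerset.filter (fun A => ¬ A.gcd id = 1) ⊆
      insert ∅ ((Finset.Icc 2 m).biUnion fun g => ((Finset.Icc 1 m).filter (fun x => g ∣ x)).powerset) := by
    intro A hA
    simp only [Finset.mem_filter, Finset.mem_powerset] at hA
    rcases eq_or_ne A ∅ with h | h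
    · simp [h]
    · have hne : A.Nonempty := Finset.nonempty_iff_ne_empty.mpr h
      obtain ⟨x, hx⟩ := hne
      have hgx : A.gcd id ∣ x := Finset.gcd_dvd hx
      have hx' := hA.1 hx
      rw [Finset.mem_Icc] at hx'
      have hgle : A.gcd id ≤ x := Nat.le_of_dvd (by omega) hgx
      have hgpos : 0 < A.gcd id := by
        rcases Nat.eq_zero_or_pos (A.gcd id) with h0 | h0
        · rw [h0] at hgx; have := Nat.eq_zero_of_zero_dvd hgx; omega
        · exact h0
      refine Finset.mem_insert_of_mem ?_
      refine Finset.mem_biUnion.mpr ⟨A.gcd id, Finset.mem_Icc.mpr ⟨by omega, by omega⟩, ?_⟩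
      exact Finset.mem_powerset.mpr (fun y hy =>
        Finset.mem_filter.mpr ⟨hA.1 hy, Finset.gcd_dvd hy⟩)
  have hbad : ((Finset.Icc 1 m).powerset.filter (fun A => ¬ A.gcd id = 1)).card
      ≤ 1 + ∑ g ∈ Finset.Icc 2 m, 2^(m/g) := by
    calc ((Finset.Icc 1 m).powerset.filter (fun A => ¬ A.gcd id = 1)).card
        ≤ (insert ∅ ((Finset.Icc 2 m).biUnion fun g =>
            ((Finset.Icc 1 m).filter (fun x => g ∣ x)).powerset)).card :=
          Finset.card_le_card hsub
      _ ≤ ((Finset.Icc 2 m).biUnion fun g =>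
            ((Finset.Icc 1 m).filter (fun x => g ∣ x)).powerset).card + 1 :=
          Finset.card_insert_le _ _
      _ ≤ (∑ g ∈ Finset.Icc 2 m, ((Finset.Icc 1 m).filter (fun x => g ∣ x)).powerset.card) + 1 :=
          by gcongr; exact Finset.card_biUnion_le
      _ = (∑ g ∈ Finset.Icc 2 m, 2^(m/g)) + 1 := by
          congr 1
          exact Finset.sum_congr rfl (fun g _ => by rw [Finset.card_powerset, card_filter_dvd'])
      _ = 1 + ∑ g ∈ Finset.Icc 2 m, 2^(m/g) := by omega
  have hsum : ∑ g ∈ Finset.Icc 2 m, 2^(m/g) ≤ 2^(m/2) + (m+1-3) * 2^(m/3) := by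
    have h23 : Finset.Icc 2 m = insert 2 (Finset.Icc 3 m) := by
      ext x; simp [Finset.mem_Icc, Finset.mem_insert]; omega
    rw [h23, Finset.sum_insert (by simp)]
    have hrest : ∑ g ∈ Finset.Icc 3 m, 2^(m/g) ≤ (m+1-3) * 2^(m/3) := by
      calc ∑ g ∈ Finset.Icc 3 m, 2^(m/g) ≤ ∑ g ∈ Finset.Icc 3 m, 2^(m/3) := by
            apply Finset.sum_le_sum
            intro g hg
            rw [Finset.mem_Icc] at hg
            exact Nat.pow_le_pow_right (by norm_num) (Nat.div_le_div_left hg.1 (by norm_num))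
        _ = (m+1-3) * 2^(m/3) := by rw [Finset.sum_const, Nat.card_Icc, smul_eq_mul]
    omega
  have h1 : 1 ≤ 2^(m/3) := Nat.one_le_two_pow
  have hc : m + 1 - 3 ≤ m := by omega
  nlinarith [hsplit, hbad, hsum, Nat.mul_le_mul_right (2^(m/3)) hc]


lemma key_ineq (A B C D E p q : ℤ)
    (hA0 : 0 ≤ A) (hB0 : 0 ≤ B) (hC0 : 0 ≤ C) (hD0 : 0 ≤ D) (hE0 : 0 ≤ E)
    (hp : 16 ≤ p) (hq0 : 0 ≤ q)
    (h1 : 8*p^3 ≤ 16*A + 16*q + p^2)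
    (h3 : B + q ≤ p^3)
    (h4 : 4*C + 2*q ≤ p^3)
    (h5 : 8*p^2 ≤ 16*D + 8*p + p^2)
    (h6 : E + p ≤ p^2)
    (hq1 : q^2 ≤ p^3)
    (hq2 : 16*q ≤ p^3) :
    B*C + C*E < A^2 + 2*(A*D) := by
  have hp0 : (0:ℤ) < p := by linarith
  have hp2 : (0:ℤ) < p^2 := by positivity
  have hp3 : (0:ℤ) < p^3 := by positivity
  have hp23 : p^2 ≤ p^3 := by nlinarith
  have hq4 : 4*q ≤ p^2 := by
    by_contra hcon
    push_neg at hcon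
    have h16 : p^4 < 16*q^2 := by nlinarith
    nlinarith [mul_le_mul_of_nonneg_left hq1 (show (0:ℤ) ≤ 16 by norm_num), mul_le_mul_of_nonneg_right hp hp3.le]
  have hX : 0 ≤ 8*p^3 - 16*q - p^2 := by linarith
  have hY : 0 ≤ 7*p^2 - 8*p := by nlinarith
  have hXA : 8*p^3 - 16*q - p^2 ≤ 16*A := by linarith
  have hYD : 7*p^2 - 8*p ≤ 16*D := by linarith
  have hAA : (8*p^3 - 16*q - p^2)^2 ≤ 256*A^2 := by
    calc (8*p^3 - 16*q - p^2)^2 = (8*p^3 - 16*q - p^2)*(8*p^3 - 16*q - p^2) := by ring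
      _ ≤ (16*A)*(16*A) := mul_le_mul hXA hXA hX (by linarith)
      _ = 256*A^2 := by ring
  have hADm : (8*p^3 - 16*q - p^2)*(7*p^2 - 8*p) ≤ 256*(A*D) := by
    calc (8*p^3 - 16*q - p^2)*(7*p^2 - 8*p) ≤ (16*A)*(16*D) := mul_le_mul hXA hYD hY (by linarith)
      _ = 256*(A*D) := by ring
  have hBq : (0:ℤ) ≤ p^3 - q := by linarith
  have hC2q : (0:ℤ) ≤ p^3 - 2*q := by linarith
  have hBCm : 4*(B*C) ≤ (p^3 - q)*(p^3 - 2*q) := by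
    calc 4*(B*C) = B*(4*C) := by ring
      _ ≤ (p^3 - q)*(p^3 - 2*q) := mul_le_mul (by linarith) (by linarith) (by linarith) hBq
  have hCEm : 4*(C*E) ≤ (p^3 - 2*q)*(p^2 - p) := by
    calc 4*(C*E) = (4*C)*E := by ring
      _ ≤ (p^3 - 2*q)*(p^2 - p) := mul_le_mul (by linarith) (by linarith) hE0 hC2q
  have e1 : p^3*(4*q) ≤ p^3*p^2 := mul_le_mul_of_nonneg_left hq4 hp3.le
  have e2 : p^2*(4*q) ≤ p^2*p^2 := mul_le_mul_of_nonneg_left hq4 hp2.le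
  have e3 : (0:ℤ) ≤ q^2 := sq_nonneg q
  have e4 : (0:ℤ) ≤ p*q := mul_nonneg hp0.le hq0
  have e5 : p^4*16 ≤ p^4*p := mul_le_mul_of_nonneg_left hp (by positivity)
  have e6 : (0:ℤ) < p^4 := by positivity
  nlinarith [hAA, hADm, hBCm, hCEm, e1, e2, e3, e4, e5, e6, hp3]


lemma aux_pow : ∀ k : ℕ, 5 ≤ k → 3*k + 10 ≤ 2^k := by
  intro k hk
  induction k with
  | zero => omega
  | succ m ih =>
    rcases Nat.lt_or_ge m 5 with h | h
    · interval_cases m <;> simp_all <;> omega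
    · have := ih (by omega)
      have h2 : (2:ℕ)^5 ≤ 2^m := Nat.pow_le_pow_right (by norm_num) h
      rw [pow_succ]
      norm_num at h2 ⊢
      omega

lemma two_pow_split (a b : ℕ) (h : b ≤ a) : (2:ℕ)^a = 2^(a-b) * 2^b := by
  rw [← pow_add]; congr 1; omega

theorem stmt_15 :
    ∃ n₀ : ℕ, 0 < n₀ ∧ ∀ n : ℕ, n₀ ≤ n →
      f (3 * n - 1) ^ 2 + 2 * f (3 * n - 1) * f (2 * n - 1) >
        f (3 * n) * f (3 * n - 2) + f (3 * n - 2) * f (2 * n) := by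
  refine ⟨20, by norm_num, ?_⟩
  intro n hn
  set F := 3*n/2 with hF
  have hcube : (2:ℕ)^(3*n) = (2^n)^3 := by rw [← pow_mul, Nat.mul_comm]
  have hsq : (2:ℕ)^(2*n) = (2^n)^2 := by rw [← pow_mul, Nat.mul_comm]
  -- coefficient bound
  have hco : 3*n+1 ≤ 2^(n-3) := by
    have := aux_pow (n-3) (by omega)
    have e : 3*(n-3)+10 = 3*n+1 := by omega
    omega
  -- upper bounds
  have h3nU : f (3*n) + 2^F ≤ (2^n)^3 := by
    have h := f_upper (3*n)
    rw [hcube] at h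
    have e : 3*n/2 = F := hF.symm
    rwa [e] at h
  have h3n2U : 4 * f (3*n-2) + 2 * 2^F ≤ (2^n)^3 := by
    have h := f_upper (3*n-2)
    have e1 : (2:ℕ)^(3*n) = 4 * 2^(3*n-2) := by
      rw [two_pow_split (3*n) 2 (by omega)]; ring
    have e2 : (2:ℕ)^F = 2 * 2^((3*n-2)/2) := by
      rw [show F = (3*n-2)/2 + 1 by omega, pow_succ]; ring
    rw [← hcube]
    omega
  have h2nU : f (2*n) + 2^n ≤ (2^n)^2 := by
    have h := f_upper (2*n)
    rw [hsq, show 2*n/2 = n by omega] at h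
    exact h
  -- lower bound at 3n-1
  have h3n1L : 8 * (2^n)^3 ≤ 16 * f (3*n-1) + 16 * 2^F + (2^n)^2 := by
    have h := f_lower (3*n-1) (by omega)
    rw [show (3*n-1)/3 = n-1 by omega, show 3*n-1+2 = 3*n+1 by omega] at h
    have hhalf : (2:ℕ)^((3*n-1)/2) ≤ 2^F := Nat.pow_le_pow_right (by norm_num) (by omega)
    have hcoeff : (3*n+1) * 2^(n-1) ≤ 2^(n-3) * 2^(n-1) := Nat.mul_le_mul_right _ hco
    have e5 : (2:ℕ)^(n-3) * 2^(n-1) = 2^(2*n-4) := by rw [← pow_add]; congr 1; omega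
    have e6 : 8 * (2^n)^3 = 16 * 2^(3*n-1) := by
      rw [← hcube, two_pow_split (3*n) 1 (by omega)]; ring
    have e7 : ((2:ℕ)^n) ^ 2 = 16 * 2^(2*n-4) := by
      rw [← hsq, two_pow_split (2*n) 4 (by omega)]; ring
    omega
  -- lower bound at 2n-1
  have h2n1L : 8 * (2^n)^2 ≤ 16 * f (2*n-1) + 8 * 2^n + (2^n)^2 := by
    have h := f_lower (2*n-1) (by omega)
    rw [show (2*n-1)/2 = n-1 by omega, show 2*n-1+2 = 2*n+1 by omega] at h
    have hthird : (2:ℕ)^((2*n-1)/3) ≤ 2^(n-1) := Nat.pow_le_pow_right (by norm_num) (by omega)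
    have hcoeff : (2*n+1) * 2^((2*n-1)/3) ≤ 2^(n-3) * 2^(n-1) :=
      Nat.mul_le_mul (by omega) hthird
    have e5 : (2:ℕ)^(n-3) * 2^(n-1) = 2^(2*n-4) := by rw [← pow_add]; congr 1; omega
    have e6 : 8 * (2^n)^2 = 16 * 2^(2*n-1) := by
      rw [← hsq, two_pow_split (2*n) 1 (by omega)]; ring
    have e7 : ((2:ℕ)^n) ^ 2 = 16 * 2^(2*n-4) := by
      rw [← hsq, two_pow_split (2*n) 4 (by omega)]; ring
    have e8 : 16 * (2:ℕ)^(n-1) = 8 * 2^n := by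
      rw [two_pow_split n 1 (by omega)]; ring
    omega
  -- q facts
  have hq1N : ((2:ℕ)^F)^2 ≤ (2^n)^3 := by
    rw [← pow_mul, ← pow_mul]
    exact Nat.pow_le_pow_right (by norm_num) (by omega)
  have hq2N : 16 * 2^F ≤ (2^n)^3 := by
    rw [show (16:ℕ) = 2^4 by norm_num, ← pow_add, ← hcube]
    exact Nat.pow_le_pow_right (by norm_num) (by omega)
  have hp16 : 16 ≤ 2^n := by
    calc (16:ℕ) = 2^4 := by norm_num
      _ ≤ 2^n := Nat.pow_le_pow_right (by norm_num) (by omega)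
  -- apply key lemma over ℤ
  have key := key_ineq (f (3*n-1)) (f (3*n)) (f (3*n-2)) (f (2*n-1)) (f (2*n))
    ((2:ℤ)^n) ((2:ℤ)^F)
    (Int.natCast_nonneg _) (Int.natCast_nonneg _) (Int.natCast_nonneg _)
    (Int.natCast_nonneg _) (Int.natCast_nonneg _)
    (by exact_mod_cast hp16) (by positivity)
    (by exact_mod_cast h3n1L) (by exact_mod_cast h3nU) (by exact_mod_cast h3n2U)
    (by exact_mod_cast h2n1L) (by exact_mod_cast h2nU)
    (by exact_mod_cast hq1N)
    (by exact_mod_cast hq2N)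
  have keyN : f (3*n) * f (3*n-2) + f (3*n-2) * f (2*n)
      < f (3*n-1)^2 + 2 * (f (3*n-1) * f (2*n-1)) := by exact_mod_cast key
  have : 2 * (f (3*n-1) * f (2*n-1)) = 2 * f (3*n-1) * f (2*n-1) := by ring
  omega
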